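/- For every integer n ≥ 1 and every candidate set C ⊆ S, LB_{2n−1}(C) ≤ LB_{2n}(C) ≤ MinTotal(C). -/

import Mathlib

/-!
Formalization of guessing games (Wordle-style), following the paper's definitions:
guesses `G`, secrets `S ⊆ G`, responses `R` with `|R| > 1`, affirmative response
`r* ∈ R`, and an answering function `a` with `a(g,s) = r* ↔ g = s`.
-/

structure GuessingGame (α ρ : Type*) [DecidableEq α] [DecidableEq ρ] where
  G : Finset α
  S : Finset α
  R : Finset ρ
  rstar : ρ
  ans : α → α → ρ
  S_subset_G : S ⊆ G
  one_lt_card_R : 1 < R.card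
  rstar_mem : rstar ∈ R
  ans_mem : ∀ g ∈ G, ∀ s ∈ S, ans g s ∈ R
  ans_eq_rstar_iff : ∀ g ∈ G, ∀ s ∈ S, (ans g s = rstar ↔ g = s)

namespace GuessingGame

variable {α ρ : Type*} [DecidableEq α] [DecidableEq ρ] (gm : GuessingGame α ρ)

/-- The split `C_{g,r} = {c ∈ C : a(g,c) = r}`. -/
def split (C : Finset α) (g : α) (r : ρ) : Finset α :=
  C.filter fun c => gm.ans g c = r

/-- `nSplits(g,C) = |{r ∈ R : C_{g,r} ≠ ∅}|`. -/
def nSplits (g : α) (C : Finset α) : ℕ :=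
  (gm.R.filter fun r => (gm.split C g r).Nonempty).card

/-- The useful guesses `UG(C)`: for `|C| > 1` the guesses `g ∈ G` with
`nSplits(g,C) ≠ 1`; for `|C| ≤ 1`, `UG(C) = C`. -/
def UG (C : Finset α) : Finset α :=
  if 1 < C.card then gm.G.filter fun g => gm.nSplits g C ≠ 1 else C

/-- `MaxSplits(C) = max_{g ∈ G} nSplits(g,C)`. -/
def MaxSplits (C : Finset α) : ℕ :=
  gm.G.sup fun g => gm.nSplits g C

end GuessingGame

/-- `Bound(n,b)`: `Bound(0,b) = 0`, `Bound(n,1) = n(n+1)/2`, and for `n > 0`, `b > 1`,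
`Bound(n,b) = Σ_{i=1}^{k} i·b^{i-1} + (k+1)·(n - (b^k - 1)/(b-1))` where
`k = ⌊log_b (n(b-1)+1)⌋`. -/
def Bound (n b : ℕ) : ℕ :=
  if n = 0 then 0
  else if b = 1 then n * (n + 1) / 2
  else
    (∑ i ∈ Finset.range (Nat.log b (n * (b - 1) + 1)), (i + 1) * b ^ i) +
      (Nat.log b (n * (b - 1) + 1) + 1) *
        (n - (b ^ Nat.log b (n * (b - 1) + 1) - 1) / (b - 1))

namespace GuessingGame

variable {α ρ : Type*} [DecidableEq α] [DecidableEq ρ] (gm : GuessingGame α ρ)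

/-- Fuel-based implementation of the well-founded recursion defining `MinTotal`:
`MinTotal(∅) = 0` and for nonempty `C`,
`MinTotal(C) = min_{g ∈ UG(C)} (|C| + Σ_{r ∈ R \ {r*}} MinTotal(C_{g,r}))`.
Fuel `|C|` suffices since for a useful guess every split is a proper subset of `C`. -/
noncomputable def MinTotalAux : ℕ → Finset α → ℕ
  | 0, _ => 0
  | n + 1, C =>
    if C = ∅ then 0
    else
      sInf (↑((gm.UG C).image fun g =>
        C.card + ∑ r ∈ gm.R.erase gm.rstar, MinTotalAux n (gm.split C g r)) : Set ℕ)

/-- `MinTotal(C)`. -/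
noncomputable def MinTotal (C : Finset α) : ℕ :=
  gm.MinTotalAux C.card C

/-- `V*(g,C) = |C| + Σ_{r ∈ R \ {r*}} MinTotal(C_{g,r})`. -/
noncomputable def Vstar (g : α) (C : Finset α) : ℕ :=
  C.card + ∑ r ∈ gm.R.erase gm.rstar, gm.MinTotal (gm.split C g r)

/-- The lower bounds `LB_i` (`i ≥ 1`; `LB 0` is junk):
`LB_1(C) = Bound(|C|, MaxSplits(S))`, `LB_2(C) = Bound(|C|, MaxSplits(C))`, and for
`i ≥ 1`, `LB_{i+2}(∅) = 0` and `LB_{i+2}(C) = min_{g ∈ UG(C)} V_i(g,C)` for nonempty `C`,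
where `V_i(g,C) = |C| + Σ_{r ∈ R \ {r*}} LB_i(C_{g,r})`. -/
noncomputable def LB : ℕ → Finset α → ℕ
  | 0, _ => 0
  | 1, C => Bound C.card (gm.MaxSplits gm.S)
  | 2, C => Bound C.card (gm.MaxSplits C)
  | n + 3, C =>
    if C = ∅ then 0
    else
      sInf (↑((gm.UG C).image fun g =>
        C.card + ∑ r ∈ gm.R.erase gm.rstar, LB (n + 1) (gm.split C g r)) : Set ℕ)

/-- `V_i(g,C) = |C| + Σ_{r ∈ R \ {r*}} LB_i(C_{g,r})`. -/
noncomputable def V (i : ℕ) (g : α) (C : Finset α) : ℕ :=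
  C.card + ∑ r ∈ gm.R.erase gm.rstar, gm.LB i (gm.split C g r)

end GuessingGame

namespace BoundAux

def Sgeo (b k : ℕ) : ℕ := ∑ i ∈ Finset.range k, b ^ i

lemma geom (b : ℕ) (hb : 1 ≤ b) (k : ℕ) : (b - 1) * Sgeo b k + 1 = b ^ k := by
  induction k with
  | zero => simp [Sgeo]
  | succ k ih =>
    obtain ⟨c, rfl⟩ : ∃ c, b = c + 1 := ⟨b - 1, by omega⟩
    have h1 : Sgeo (c+1) (k+1) = Sgeo (c+1) k + (c+1) ^ k := Finset.sum_range_succ _ _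
    have h2 : (c+1) ^ (k+1) = c * (c+1) ^ k + (c+1) ^ k := by ring
    have h3 : c * (Sgeo (c+1) k + (c+1)^k) = c * Sgeo (c+1) k + c * (c+1)^k := by ring
    have h4 : c * Sgeo (c+1) (k+1) = c * (Sgeo (c+1) k + (c+1)^k) := by rw [h1]
    simp only [Nat.add_sub_cancel] at *
    omega

lemma Sgeo_succ (b k : ℕ) : Sgeo b (k+1) = 1 + b * Sgeo b k := by
  rw [Sgeo, Sgeo, Finset.sum_range_succ', Finset.mul_sum]
  simp only [pow_zero]
  rw [add_comm]
  congr 1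
  exact Finset.sum_congr rfl fun i _ => by ring

lemma Sgeo_mono (b k k' : ℕ) (hb : 1 ≤ b) (h : k ≤ k') : Sgeo b k ≤ Sgeo b k' :=
  Finset.sum_le_sum_of_subset (Finset.range_subset_range.2 h)

lemma Sgeo_mono_base {b b' : ℕ} (h : b ≤ b') (k : ℕ) : Sgeo b k ≤ Sgeo b' k :=
  Finset.sum_le_sum fun i _ => Nat.pow_le_pow_left h i

lemma self_le_Sgeo (b k : ℕ) (hb : 1 ≤ b) : k ≤ Sgeo b k := by
  calc k = ∑ _i ∈ Finset.range k, 1 := by simp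
  _ ≤ Sgeo b k := Finset.sum_le_sum fun i _ => Nat.one_le_pow _ _ hb

def fB (b i : ℕ) : ℕ := Nat.clog b (i * (b - 1) + 1)

def FB (b n : ℕ) : ℕ := ∑ i ∈ Finset.range n, fB b (i + 1)

lemma fB_le_iff {b : ℕ} (hb : 2 ≤ b) {i k : ℕ} : fB b i ≤ k ↔ i ≤ Sgeo b k := by
  rw [fB, Nat.clog_le_iff_le_pow (by omega), ← geom b (by omega) k]
  have hmc : (b-1) * Sgeo b k = Sgeo b k * (b-1) := mul_comm _ _
  constructor
  · intro h
    have h2 : i * (b-1) ≤ Sgeo b k * (b-1) := by omega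
    exact Nat.le_of_mul_le_mul_right h2 (by omega)
  · intro h
    have h2 : i * (b-1) ≤ Sgeo b k * (b-1) := Nat.mul_le_mul h (le_refl _)
    omega

lemma fB_mono {b : ℕ} (hb : 2 ≤ b) {i j : ℕ} (h : i ≤ j) : fB b i ≤ fB b j := by
  rw [fB_le_iff hb]
  exact h.trans ((fB_le_iff hb).1 (le_refl _))

lemma fB_one {b : ℕ} (hb : 2 ≤ b) : fB b 1 = 1 := by
  have h1 : fB b 1 ≤ 1 := (fB_le_iff hb).2 (by simp [Sgeo])
  have h2 : ¬ fB b 1 ≤ 0 := by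
    rw [fB_le_iff hb]; simp [Sgeo]
  omega

lemma fB_le_self {b : ℕ} (hb : 2 ≤ b) (i : ℕ) : fB b i ≤ i :=
  (fB_le_iff hb).2 (self_le_Sgeo b i (by omega))

lemma fB_mul_le {b : ℕ} (hb : 2 ≤ b) (i : ℕ) (hi : 1 ≤ i) : fB b (i * b) ≤ fB b i + 1 := by
  rw [fB_le_iff hb, Sgeo_succ]
  have : i ≤ Sgeo b (fB b i) := (fB_le_iff hb).1 (le_refl _)
  calc i * b ≤ Sgeo b (fB b i) * b := Nat.mul_le_mul_right _ this
  _ ≤ 1 + b * Sgeo b (fB b i) := by rw [mul_comm]; omega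

lemma fB_anti {b b' : ℕ} (hb : 2 ≤ b) (h : b ≤ b') (i : ℕ) : fB b' i ≤ fB b i := by
  rw [fB_le_iff (by omega)]
  exact ((fB_le_iff hb).1 (le_refl _)).trans (Sgeo_mono_base h _)

lemma fB_eq_of_between {b : ℕ} (hb : 2 ≤ b) {i k : ℕ} (h1 : Sgeo b k < i) (h2 : i ≤ Sgeo b (k+1)) :
    fB b i = k + 1 := by
  have a1 : fB b i ≤ k + 1 := (fB_le_iff hb).2 h2
  have a2 : ¬ fB b i ≤ k := by rw [fB_le_iff hb]; omega
  omega

lemma FB_block {b : ℕ} (hb : 2 ≤ b) (k : ℕ) :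
    ∑ i ∈ Finset.range (Sgeo b k), fB b (i + 1) = ∑ i ∈ Finset.range k, (i + 1) * b ^ i := by
  induction k with
  | zero => simp [Sgeo]
  | succ k ih =>
    have hS : Sgeo b (k+1) = Sgeo b k + b ^ k := Finset.sum_range_succ _ _
    rw [hS, Finset.sum_range_add, ih, Finset.sum_range_succ]
    congr 1
    have : ∀ i ∈ Finset.range (b ^ k), fB b (Sgeo b k + i + 1) = k + 1 := by
      intro i hi
      rw [Finset.mem_range] at hi
      exact fB_eq_of_between hb (by omega) (by rw [hS]; omega)
    rw [Finset.sum_congr rfl this]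
    simp [mul_comm]
end BoundAux

open BoundAux in
lemma Bound_eq_FB {b : ℕ} (hb : 2 ≤ b) (n : ℕ) : Bound n b = FB b n := by
  rcases Nat.eq_zero_or_pos n with h | h
  · simp [Bound, FB, h]
  set k := Nat.log b (n * (b-1) + 1) with hk
  have harg : n * (b-1) + 1 ≠ 0 := by omega
  have hlow : b ^ k ≤ n * (b-1) + 1 := Nat.pow_log_le_self b harg
  have hhigh : n * (b-1) + 1 < b ^ (k+1) := Nat.lt_pow_succ_log_self (by omega) _
  have hg : (b-1) * Sgeo b k + 1 = b ^ k := geom b (by omega) k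
  have hg' : (b-1) * Sgeo b (k+1) + 1 = b ^ (k+1) := geom b (by omega) (k+1)
  have hSn : Sgeo b k ≤ n := by
    have : (b-1) * Sgeo b k ≤ n * (b-1) := by omega
    rw [mul_comm (b-1)] at this
    exact Nat.le_of_mul_le_mul_right this (by omega)
  have hnS : n < Sgeo b (k+1) := by
    by_contra hc
    push_neg at hc
    have h5 : (b-1) * Sgeo b (k+1) ≤ (b-1) * n := Nat.mul_le_mul (le_refl _) hc
    have h6 : (b-1) * n = n * (b-1) := mul_comm _ _
    omega
  have hdiv : (b ^ k - 1) / (b - 1) = Sgeo b k := by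
    have : b ^ k - 1 = (b-1) * Sgeo b k := by omega
    rw [this, Nat.mul_div_cancel_left _ (by omega : 0 < b - 1)]
  have : Bound n b = (∑ i ∈ Finset.range k, (i + 1) * b ^ i) + (k + 1) * (n - Sgeo b k) := by
    rw [Bound, if_neg (by omega), if_neg (by omega), ← hk, hdiv]
  have hsplit := Finset.sum_range_add (fun i => fB b (i+1)) (Sgeo b k) (n - Sgeo b k)
  have hnn : Sgeo b k + (n - Sgeo b k) = n := by omega
  rw [hnn] at hsplit
  rw [this, FB, hsplit, FB_block hb]
  congr 1
  have hcong : ∀ i ∈ Finset.range (n - Sgeo b k), fB b (Sgeo b k + i + 1) = k + 1 := by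
    intro i hi
    rw [Finset.mem_range] at hi
    exact fB_eq_of_between hb (by omega) (by omega)
  rw [Finset.sum_congr rfl hcong]
  simp [mul_comm]

lemma gauss (n : ℕ) : ∑ i ∈ Finset.range n, (i + 1) = n * (n + 1) / 2 := by
  induction n with
  | zero => simp
  | succ n ih =>
    rw [Finset.sum_range_succ, ih]
    have h2 : 2 ∣ n * (n+1) := (Nat.even_mul_succ_self n).two_dvd
    have h2' : 2 ∣ (n+1) * (n+1+1) := (Nat.even_mul_succ_self (n+1)).two_dvd
    have hx : (n+1) * (n+1+1) = n*(n+1) + 2*(n+1) := by ring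
    omega

lemma Bound_zero (b : ℕ) : Bound 0 b = 0 := by simp [Bound]

lemma Bound_one {b : ℕ} (hb : 1 ≤ b) : Bound 1 b = 1 := by
  rcases Nat.lt_or_ge b 2 with h | h
  · have : b = 1 := by omega
    subst this; simp [Bound]
  · rw [Bound_eq_FB h]
    simp [BoundAux.FB, BoundAux.fB_one h]

lemma Bound_anti {b b' : ℕ} (hb : 1 ≤ b) (h : b ≤ b') (n : ℕ) : Bound n b' ≤ Bound n b := by
  rcases Nat.eq_zero_or_pos n with h0 | h0
  · simp [h0, Bound_zero]
  rcases Nat.lt_or_ge b 2 with h1 | h1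
  · have hb1 : b = 1 := by omega
    subst hb1
    rcases Nat.lt_or_ge b' 2 with h2 | h2
    · have : b' = 1 := by omega
      simp [this]
    · rw [Bound_eq_FB h2, Bound, if_neg (by omega), if_pos rfl, ← gauss]
      exact Finset.sum_le_sum fun i _ => BoundAux.fB_le_self h2 (i+1)
  · rw [Bound_eq_FB h1, Bound_eq_FB (by omega)]
    exact Finset.sum_le_sum fun i _ => BoundAux.fB_anti h1 h _

lemma mul_add_cancel_nat {m a b c d : ℕ} (hc : c < m) (hd : d < m)
    (h : a * m + c = b * m + d) : a = b ∧ c = d := by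
  have hm : 0 < m := by omega
  have h1 : (m * a + c) / m = a := by
    rw [Nat.mul_add_div hm, Nat.div_eq_of_lt hc]
    omega
  have h2 : (m * b + d) / m = b := by
    rw [Nat.mul_add_div hm, Nat.div_eq_of_lt hd]
    omega
  have hca : m * a + c = m * b + d := by
    have e1 : m * a = a * m := mul_comm _ _
    have e2 : m * b = b * m := mul_comm _ _
    omega
  have hab : a = b := by rw [← h1, ← h2, hca]
  subst hab
  have e1 : m * a = a * m := mul_comm _ _
  omega

open BoundAux in
lemma sum_range_le_sum_finset (h : ℕ → ℕ) (mono : Monotone h) (c : ℕ) :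
    ∀ (N : ℕ) (T : Finset ℕ), T.card = N → (∀ t ∈ T, c + 1 ≤ t) →
    ∑ i ∈ Finset.range N, h (i + 1 + c) ≤ ∑ t ∈ T, h t := by
  intro N
  induction N with
  | zero => simp
  | succ N ih =>
    intro T hcard hT
    have hne : T.Nonempty := Finset.card_pos.1 (by omega)
    set M := T.max' hne with hM
    have hMmem : M ∈ T := T.max'_mem hne
    have hsub : T ⊆ Finset.Icc (c+1) M := by
      intro t ht
      exact Finset.mem_Icc.2 ⟨hT t ht, T.le_max' t ht⟩
    have hcardIcc : (Finset.Icc (c+1) M).card = M - c := by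
      rw [Nat.card_Icc]; omega
    have hMc : c + 1 ≤ M := hT M hMmem
    have hNM : N + 1 + c ≤ M := by
      have := Finset.card_le_card hsub
      omega
    have herase : (T.erase M).card = N := by
      rw [Finset.card_erase_of_mem hMmem]; omega
    have hT' : ∀ t ∈ T.erase M, c + 1 ≤ t := fun t ht => hT t (Finset.mem_of_mem_erase ht)
    calc ∑ i ∈ Finset.range (N+1), h (i + 1 + c)
        = (∑ i ∈ Finset.range N, h (i + 1 + c)) + h (N + 1 + c) := Finset.sum_range_succ _ _
      _ ≤ (∑ t ∈ T.erase M, h t) + h M := Nat.add_le_add (ih _ herase hT') (mono hNM)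
      _ = ∑ t ∈ T, h t := Finset.sum_erase_add _ _ hMmem

open BoundAux in
lemma keyB {ι : Type*} [DecidableEq ι] {b : ℕ} (hb : 2 ≤ b) (E : Finset ι) (ν : ι → ℕ)
    (ε : ℕ) (hε : ε ≤ 1)
    (hm : (E.filter fun r => ν r ≠ 0).card + ε ≤ b) :
    Bound (ε + ∑ r ∈ E, ν r) b ≤ (ε + ∑ r ∈ E, ν r) + ∑ r ∈ E, Bound (ν r) b := by
  classical
  set E' := E.filter fun r => ν r ≠ 0 with hE'
  set m := E'.card with hmdef
  have hsum_nu : ∑ r ∈ E', ν r = ∑ r ∈ E, ν r := Finset.sum_filter_ne_zero E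
  have hsum_B : ∑ r ∈ E, Bound (ν r) b = ∑ r ∈ E', Bound (ν r) b := by
    refine (Finset.sum_subset (Finset.filter_subset _ _) ?_).symm
    intro x hx hx'
    have : ν x = 0 := by
      by_contra hc
      exact hx' (Finset.mem_filter.2 ⟨hx, hc⟩)
    rw [this, Bound_zero]
  set n := ε + ∑ r ∈ E, ν r with hn
  rcases Nat.eq_zero_or_pos n with h0 | h0
  · simp [h0, Bound_zero]
  rw [Bound_eq_FB hb, hsum_B, Finset.sum_congr rfl (fun r _ => Bound_eq_FB hb (ν r))]
  set I : Finset ((_ : ι) × ℕ) := E'.sigma (fun r => Finset.range (ν r)) with hI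
  have hcardI : I.card = n - ε := by
    rw [hI, Finset.card_sigma]
    simp only [Finset.card_range]
    omega
  set idx : ι → ℕ := fun r => if h : r ∈ E' then (E'.equivFin ⟨r, h⟩ : Fin m).val else 0 with hidx
  have hidx_lt : ∀ r ∈ E', idx r < m := by
    intro r hr
    simp only [hidx, dif_pos hr]
    exact (E'.equivFin ⟨r, hr⟩).isLt
  have hidx_inj : ∀ r ∈ E', ∀ r' ∈ E', idx r = idx r' → r = r' := by
    intro r hr r' hr' heq
    simp only [hidx, dif_pos hr, dif_pos hr'] at heq
    have h2 := E'.equivFin.injective (Fin.val_injective heq)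
    exact congrArg Subtype.val h2
  set rank : ((_ : ι) × ℕ) → ℕ := fun p => ε + p.2 * m + idx p.1 + 1 with hrank
  have hrank_inj : ∀ p ∈ I, ∀ q ∈ I, rank p = rank q → p = q := by
    intro p hp q hq heq
    obtain ⟨p1, p2⟩ := p
    obtain ⟨q1, q2⟩ := q
    rw [hI, Finset.mem_sigma] at hp hq
    simp only [hrank] at heq
    have h1 : p2 * m + idx p1 = q2 * m + idx q1 := by omega
    obtain ⟨h2, h3⟩ := mul_add_cancel_nat (hidx_lt _ hp.1) (hidx_lt _ hq.1) h1
    have h4 : p1 = q1 := hidx_inj _ hp.1 _ hq.1 h3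
    subst h4; subst h2; rfl
  have hstep : ∑ i ∈ Finset.range (n - ε), fB b (i + 1 + ε)
      ≤ (n - ε) + ∑ r ∈ E', FB b (ν r) := by
    have hinjOn : Set.InjOn rank ↑I := fun p hp q hq => hrank_inj p hp q hq
    have hcardT : (I.image rank).card = n - ε := by
      rw [Finset.card_image_of_injOn hinjOn, hcardI]
    have hTpos : ∀ t ∈ I.image rank, ε + 1 ≤ t := by
      intro t ht
      obtain ⟨p, _, rfl⟩ := Finset.mem_image.1 ht
      simp only [hrank]
      omega
    have h1 := sum_range_le_sum_finset (fB b) (fun i j hij => fB_mono hb hij) ε (n - ε)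
      (I.image rank) hcardT hTpos
    have h2 : ∑ t ∈ I.image rank, fB b t = ∑ p ∈ I, fB b (rank p) :=
      Finset.sum_image hrank_inj
    have h3 : ∀ p ∈ I, fB b (rank p) ≤ 1 + fB b (p.2 + 1) := by
      intro p hp
      rw [hI, Finset.mem_sigma] at hp
      have hlt := hidx_lt _ hp.1
      have hr1 : rank p ≤ (p.2 + 1) * b := by
        simp only [hrank]
        have h4 : (p.2+1) * (m + ε) ≤ (p.2+1) * b := Nat.mul_le_mul_left _ hm
        have h5 : (p.2+1) * (m+ε) = p.2 * m + m + (p.2+1) * ε := by ring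
        have h6 : ε ≤ (p.2+1) * ε := Nat.le_mul_of_pos_left _ (by omega)
        omega
      calc fB b (rank p) ≤ fB b ((p.2+1) * b) := fB_mono hb hr1
        _ ≤ fB b (p.2+1) + 1 := fB_mul_le hb _ (by omega)
        _ = 1 + fB b (p.2+1) := by omega
    have h7 : ∑ p ∈ I, fB b (rank p) ≤ ∑ p ∈ I, (1 + fB b (p.2 + 1)) :=
      Finset.sum_le_sum h3
    have h8 : ∑ p ∈ I, (1 + fB b (p.2 + 1)) = I.card + ∑ p ∈ I, fB b (p.2 + 1) := by
      rw [Finset.sum_add_distrib, Finset.sum_const, smul_eq_mul, mul_one]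
    have h9 : ∑ p ∈ I, fB b (p.2 + 1) = ∑ r ∈ E', ∑ j ∈ Finset.range (ν r), fB b (j + 1) := by
      rw [hI, Finset.sum_sigma]
    have h10 : ∑ r ∈ E', ∑ j ∈ Finset.range (ν r), fB b (j + 1) = ∑ r ∈ E', FB b (ν r) := rfl
    calc ∑ i ∈ Finset.range (n - ε), fB b (i + 1 + ε)
        ≤ ∑ t ∈ I.image rank, fB b t := h1
      _ = ∑ p ∈ I, fB b (rank p) := h2
      _ ≤ ∑ p ∈ I, (1 + fB b (p.2 + 1)) := h7
      _ = I.card + ∑ r ∈ E', FB b (ν r) := by rw [h8, h9, h10]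
      _ = (n - ε) + ∑ r ∈ E', FB b (ν r) := by rw [hcardI]
  interval_cases ε
  · simp only [Nat.sub_zero, Nat.add_zero] at hstep
    rw [FB]
    omega
  · have hss := Finset.sum_range_succ' (fun i => fB b (i + 1)) (n - 1)
    rw [Nat.sub_add_cancel h0] at hss
    have h8 : FB b n = (∑ i ∈ Finset.range (n-1), fB b (i + 1 + 1)) + fB b (0 + 1) := hss
    rw [h8]
    have h9 : fB b (0 + 1) = 1 := fB_one hb
    omega

namespace GuessingGame

variable {α ρ : Type*} [DecidableEq α] [DecidableEq ρ] (gm : GuessingGame α ρ)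

lemma split_subset (C : Finset α) (g : α) (r : ρ) : gm.split C g r ⊆ C :=
  Finset.filter_subset _ _

lemma mem_split {C : Finset α} {g c : α} {r : ρ} :
    c ∈ gm.split C g r ↔ c ∈ C ∧ gm.ans g c = r := Finset.mem_filter

lemma split_mono {C C' : Finset α} (h : C ⊆ C') (g : α) (r : ρ) :
    gm.split C g r ⊆ gm.split C' g r :=
  Finset.filter_subset_filter _ h

lemma nSplits_mono {C C' : Finset α} (h : C ⊆ C') (g : α) :
    gm.nSplits g C ≤ gm.nSplits g C' := by
  apply Finset.card_le_card
  intro r hr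
  rw [Finset.mem_filter] at hr ⊢
  exact ⟨hr.1, hr.2.mono (gm.split_mono h g r)⟩

lemma maxSplits_mono {C C' : Finset α} (h : C ⊆ C') :
    gm.MaxSplits C ≤ gm.MaxSplits C' :=
  Finset.sup_le fun g hg => (gm.nSplits_mono h g).trans
    (Finset.le_sup (f := fun g => gm.nSplits g C') hg)

lemma sum_split_card {C : Finset α} (hCS : C ⊆ gm.S) {g : α} (hg : g ∈ gm.G) :
    ∑ r ∈ gm.R, (gm.split C g r).card = C.card :=
  (Finset.card_eq_sum_card_fiberwise fun c hc => gm.ans_mem g hg c (hCS hc)).symm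

lemma split_rstar_card {C : Finset α} (hCS : C ⊆ gm.S) {g : α} (hg : g ∈ gm.G) :
    (gm.split C g gm.rstar).card ≤ 1 := by
  apply Finset.card_le_one.2
  intro a ha b hb
  rw [gm.mem_split] at ha hb
  have ha' := (gm.ans_eq_rstar_iff g hg a (hCS ha.1)).1 ha.2
  have hb' := (gm.ans_eq_rstar_iff g hg b (hCS hb.1)).1 hb.2
  rw [← ha', ← hb']

lemma one_le_nSplits {C : Finset α} (hCS : C ⊆ gm.S) (hC : C.Nonempty) {g : α}
    (hg : g ∈ gm.G) : 1 ≤ gm.nSplits g C := by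
  obtain ⟨c, hc⟩ := hC
  exact Finset.card_pos.2 ⟨gm.ans g c, Finset.mem_filter.2 ⟨gm.ans_mem g hg c (hCS hc),
    ⟨c, gm.mem_split.2 ⟨hc, rfl⟩⟩⟩⟩

lemma two_le_nSplits {C : Finset α} (hCS : C ⊆ gm.S) {c1 c2 : α} (h1 : c1 ∈ C)
    (h2 : c2 ∈ C) (hne : c1 ≠ c2) : 2 ≤ gm.nSplits c1 C := by
  have hg1 : c1 ∈ gm.G := gm.S_subset_G (hCS h1)
  have hr1 : gm.ans c1 c1 = gm.rstar := (gm.ans_eq_rstar_iff c1 hg1 c1 (hCS h1)).2 rfl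
  have hr2 : gm.ans c1 c2 ≠ gm.rstar := fun h =>
    hne ((gm.ans_eq_rstar_iff c1 hg1 c2 (hCS h2)).1 h)
  rw [nSplits]
  apply Finset.one_lt_card.2
  refine ⟨gm.rstar, ?_, gm.ans c1 c2, ?_, fun h => hr2 h.symm⟩
  · exact Finset.mem_filter.2 ⟨gm.rstar_mem, ⟨c1, gm.mem_split.2 ⟨h1, hr1⟩⟩⟩
  · exact Finset.mem_filter.2 ⟨gm.ans_mem c1 hg1 c2 (hCS h2), ⟨c2, gm.mem_split.2 ⟨h2, rfl⟩⟩⟩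

lemma one_le_maxSplits {C : Finset α} (hCS : C ⊆ gm.S) (hC : C.Nonempty) :
    1 ≤ gm.MaxSplits C := by
  obtain ⟨c, hc⟩ := hC
  have hg : c ∈ gm.G := gm.S_subset_G (hCS hc)
  exact le_trans (gm.one_le_nSplits hCS ⟨c, hc⟩ hg)
    (Finset.le_sup (f := fun g => gm.nSplits g C) hg)

lemma two_le_maxSplits {C : Finset α} (hCS : C ⊆ gm.S) (hC : 1 < C.card) :
    2 ≤ gm.MaxSplits C := by
  obtain ⟨c1, h1, c2, h2, hne⟩ := Finset.one_lt_card.1 hC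
  exact le_trans (gm.two_le_nSplits hCS h1 h2 hne)
    (Finset.le_sup (f := fun g => gm.nSplits g C) (gm.S_subset_G (hCS h1)))

lemma UG_subset_G {C : Finset α} (hCS : C ⊆ gm.S) : gm.UG C ⊆ gm.G := by
  rw [UG]
  split
  · exact Finset.filter_subset _ _
  · exact fun c hc => gm.S_subset_G (hCS hc)

lemma UG_nonempty {C : Finset α} (hCS : C ⊆ gm.S) (hC : C.Nonempty) :
    (gm.UG C).Nonempty := by
  rw [UG]
  split
  · next h =>
    obtain ⟨c1, h1, c2, h2, hne⟩ := Finset.one_lt_card.1 h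
    refine ⟨c1, Finset.mem_filter.2 ⟨gm.S_subset_G (hCS h1), ?_⟩⟩
    have := gm.two_le_nSplits hCS h1 h2 hne
    omega
  · exact hC

lemma split_card_lt {C : Finset α} (hCS : C ⊆ gm.S) (hC : C.Nonempty) {g : α}
    (hg : g ∈ gm.UG C) {r : ρ} (hr : r ≠ gm.rstar) :
    (gm.split C g r).card < C.card := by
  rw [UG] at hg
  by_cases h1 : 1 < C.card
  · rw [if_pos h1] at hg
    obtain ⟨hgG, hns⟩ := Finset.mem_filter.1 hg
    have h2 : 2 ≤ gm.nSplits g C := by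
      have := gm.one_le_nSplits hCS hC hgG
      omega
    obtain ⟨r1, hr1, r2, hr2, hne⟩ := Finset.one_lt_card.1 h2
    have hc1 : (gm.split C g r1).Nonempty := (Finset.mem_filter.1 hr1).2
    have hc2 : (gm.split C g r2).Nonempty := (Finset.mem_filter.1 hr2).2
    obtain ⟨rr, hrrne, c', hc'⟩ : ∃ rr, rr ≠ r ∧ (gm.split C g rr).Nonempty := by
      rcases ne_or_eq r1 r with hne1 | heq
      · exact ⟨r1, hne1, hc1⟩
      · exact ⟨r2, by rw [← heq]; exact hne.symm, hc2⟩
    apply Finset.card_lt_card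
    rw [Finset.ssubset_iff_of_subset (gm.split_subset C g r)]
    refine ⟨c', (gm.mem_split.1 hc').1, fun hmem => hrrne ?_⟩
    exact (gm.mem_split.1 hc').2.symm.trans (gm.mem_split.1 hmem).2
  · rw [if_neg h1] at hg
    have hcard : C.card = 1 := by
      obtain ⟨c, hc⟩ := hC
      have := Finset.card_pos.2 ⟨c, hc⟩
      omega
    have hgG : g ∈ gm.G := gm.S_subset_G (hCS hg)
    obtain ⟨c0, hc0⟩ := Finset.card_eq_one.1 hcard
    have hgc : g = c0 := by rw [hc0, Finset.mem_singleton] at hg; exact hg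
    have hempty : gm.split C g r = ∅ := by
      rw [Finset.eq_empty_iff_forall_notMem]
      intro c hcm
      obtain ⟨hcC, hans⟩ := gm.mem_split.1 hcm
      have hcc0 : c = c0 := by rw [hc0, Finset.mem_singleton] at hcC; exact hcC
      have hgc' : g = c := by rw [hgc, hcc0]
      have hstar : gm.ans g c = gm.rstar := (gm.ans_eq_rstar_iff g hgG c (hCS hcC)).2 hgc'
      exact hr (hans.symm.trans hstar)
    rw [hempty, Finset.card_empty]
    omega

end GuessingGame

lemma sInf_finset_image_le {β : Type*} {s : Finset β} {f : β → ℕ} {g : β} (hg : g ∈ s) :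
    sInf (↑(s.image f) : Set ℕ) ≤ f g :=
  Nat.sInf_le (Finset.mem_coe.2 (Finset.mem_image_of_mem f hg))

lemma sInf_finset_image_mem {β : Type*} {s : Finset β} (hs : s.Nonempty) (f : β → ℕ) :
    ∃ g ∈ s, sInf (↑(s.image f) : Set ℕ) = f g := by
  obtain ⟨g0, hg0⟩ := hs
  have h := Nat.sInf_mem (s := (↑(s.image f) : Set ℕ))
    ⟨f g0, Finset.mem_coe.2 (Finset.mem_image_of_mem f hg0)⟩
  rw [Finset.mem_coe, Finset.mem_image] at h
  obtain ⟨g, hg, he⟩ := h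
  exact ⟨g, hg, he.symm⟩

lemma sInf_finset_image_le_image {β : Type*} {s : Finset β} (hs : s.Nonempty) {f1 f2 : β → ℕ}
    (h : ∀ g ∈ s, f1 g ≤ f2 g) :
    sInf (↑(s.image f1) : Set ℕ) ≤ sInf (↑(s.image f2) : Set ℕ) := by
  obtain ⟨g, hg, he⟩ := sInf_finset_image_mem hs f2
  rw [he]
  exact le_trans (sInf_finset_image_le hg) (h g hg)

namespace GuessingGame

variable {α ρ : Type*} [DecidableEq α] [DecidableEq ρ] (gm : GuessingGame α ρ)

lemma minTotal_empty : gm.MinTotal ∅ = 0 := by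
  rw [MinTotal]
  simp [MinTotalAux]

lemma minTotalAux_stable : ∀ (fuel : ℕ) (C : Finset α), C ⊆ gm.S → C.card ≤ fuel →
    gm.MinTotalAux fuel C = gm.MinTotal C := by
  intro fuel
  induction fuel using Nat.strong_induction_on with
  | _ fuel ih =>
    intro C hCS hle
    rcases fuel with _ | f
    · have hc : C.card = 0 := by omega
      rw [MinTotal, hc]
    · by_cases hE : C = ∅
      · subst hE
        rw [MinTotal]
        simp [MinTotalAux]
      · have hc : 0 < C.card := Finset.card_pos.2 (Finset.nonempty_iff_ne_empty.2 hE)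
        obtain ⟨cc, hcc⟩ : ∃ cc, C.card = cc + 1 := ⟨C.card - 1, by omega⟩
        rw [MinTotal, hcc]
        simp only [MinTotalAux]
        rw [if_neg hE, if_neg hE]
        congr 1
        rw [Finset.coe_inj]
        apply Finset.image_congr
        intro g hg
        have hgUG : g ∈ gm.UG C := Finset.mem_coe.1 hg
        dsimp only
        congr 1
        apply Finset.sum_congr rfl
        intro r hr
        have hrne : r ≠ gm.rstar := (Finset.mem_erase.1 hr).1
        have hlt : (gm.split C g r).card < C.card :=
          gm.split_card_lt hCS (Finset.nonempty_iff_ne_empty.2 hE) hgUG hrne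
        have hsub : gm.split C g r ⊆ gm.S := (gm.split_subset C g r).trans hCS
        rw [ih f (Nat.lt_succ_self f) _ hsub (by omega),
          ih cc (by omega) _ hsub (by omega)]

lemma minTotal_eq {C : Finset α} (hCS : C ⊆ gm.S) (hC : C ≠ ∅) :
    gm.MinTotal C = sInf (↑((gm.UG C).image fun g =>
      C.card + ∑ r ∈ gm.R.erase gm.rstar, gm.MinTotal (gm.split C g r)) : Set ℕ) := by
  have hc : 0 < C.card := Finset.card_pos.2 (Finset.nonempty_iff_ne_empty.2 hC)
  obtain ⟨cc, hcc⟩ : ∃ cc, C.card = cc + 1 := ⟨C.card - 1, by omega⟩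
  rw [MinTotal, hcc]
  simp only [MinTotalAux]
  rw [if_neg hC]
  congr 1
  rw [Finset.coe_inj]
  apply Finset.image_congr
  intro g hg
  have hgUG : g ∈ gm.UG C := Finset.mem_coe.1 hg
  dsimp only
  congr 1
  apply Finset.sum_congr rfl
  intro r hr
  have hrne : r ≠ gm.rstar := (Finset.mem_erase.1 hr).1
  have hlt : (gm.split C g r).card < C.card :=
    gm.split_card_lt hCS (Finset.nonempty_iff_ne_empty.2 hC) hgUG hrne
  exact gm.minTotalAux_stable cc _ ((gm.split_subset C g r).trans hCS) (by omega)

lemma minTotal_spec {C : Finset α} (hCS : C ⊆ gm.S) (hC : C ≠ ∅) :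
    ∃ g ∈ gm.UG C, gm.MinTotal C
      = C.card + ∑ r ∈ gm.R.erase gm.rstar, gm.MinTotal (gm.split C g r) := by
  rw [gm.minTotal_eq hCS hC]
  exact sInf_finset_image_mem (gm.UG_nonempty hCS (Finset.nonempty_iff_ne_empty.2 hC)) _

lemma LB_eq_succ3 (n : ℕ) {C : Finset α} (hC : C ≠ ∅) :
    gm.LB (n+3) C = sInf (↑((gm.UG C).image fun g =>
      C.card + ∑ r ∈ gm.R.erase gm.rstar, gm.LB (n+1) (gm.split C g r)) : Set ℕ) := by
  rw [LB, if_neg hC]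

lemma LB_empty_succ3 (n : ℕ) : gm.LB (n+3) ∅ = 0 := by
  rw [LB, if_pos rfl]

open BoundAux in
lemma LB2_le_minTotal : ∀ (N : ℕ) (C : Finset α), C.card = N → C ⊆ gm.S →
    Bound C.card (gm.MaxSplits C) ≤ gm.MinTotal C := by
  intro N
  induction N using Nat.strong_induction_on with
  | _ N ih =>
    intro C hN hCS
    by_cases hC : C = ∅
    · subst hC
      simp [Bound_zero, gm.minTotal_empty]
    have hCne : C.Nonempty := Finset.nonempty_iff_ne_empty.2 hC
    obtain ⟨g, hg, heq⟩ := gm.minTotal_spec hCS hC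
    have hgG : g ∈ gm.G := gm.UG_subset_G hCS hg
    have hb1 : 1 ≤ gm.MaxSplits C := gm.one_le_maxSplits hCS hCne
    have hterm : ∀ r ∈ gm.R.erase gm.rstar,
        Bound (gm.split C g r).card (gm.MaxSplits C) ≤ gm.MinTotal (gm.split C g r) := by
      intro r hr
      have hrne : r ≠ gm.rstar := (Finset.mem_erase.1 hr).1
      rcases eq_or_ne (gm.split C g r) ∅ with he | hne
      · rw [he]
        simp [Bound_zero]
      · have hsne : (gm.split C g r).Nonempty := Finset.nonempty_iff_ne_empty.2 hne
        have hsub : gm.split C g r ⊆ gm.S := (gm.split_subset C g r).trans hCS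
        have hlt : (gm.split C g r).card < C.card :=
          gm.split_card_lt hCS hCne hg hrne
        calc Bound (gm.split C g r).card (gm.MaxSplits C)
            ≤ Bound (gm.split C g r).card (gm.MaxSplits (gm.split C g r)) :=
              Bound_anti (gm.one_le_maxSplits hsub hsne)
                (gm.maxSplits_mono (gm.split_subset C g r)) _
          _ ≤ gm.MinTotal (gm.split C g r) := ih _ (by omega) _ rfl hsub
    rcases eq_or_lt_of_le hb1 with hb | hb2
    · -- MaxSplits C = 1, so C.card = 1
      have hcard1 : C.card = 1 := by
        by_contra hne1
        have h2 : 1 < C.card := by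
          have := Finset.card_pos.2 hCne
          omega
        have := gm.two_le_maxSplits hCS h2
        omega
      rw [hcard1, Bound_one hb1]
      rw [heq, hcard1]
      omega
    · -- 2 ≤ MaxSplits C
      have hsum0 := gm.sum_split_card hCS hgG
      have hsum1 : (∑ r ∈ gm.R.erase gm.rstar, (gm.split C g r).card)
          + (gm.split C g gm.rstar).card = C.card := by
        rw [Finset.sum_erase_add _ _ gm.rstar_mem]
        exact hsum0
      have hε : (gm.split C g gm.rstar).card ≤ 1 := gm.split_rstar_card hCS hgG
      have hcount : ((gm.R.erase gm.rstar).filter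
            fun r => (gm.split C g r).card ≠ 0).card + (gm.split C g gm.rstar).card
          ≤ gm.MaxSplits C := by
        have hnb : gm.nSplits g C ≤ gm.MaxSplits C :=
          Finset.le_sup (f := fun g => gm.nSplits g C) hgG
        have hsubA : (gm.R.erase gm.rstar).filter (fun r => (gm.split C g r).card ≠ 0)
            ⊆ gm.R.filter fun r => (gm.split C g r).Nonempty := by
          intro r hrm
          obtain ⟨hre, hrc⟩ := Finset.mem_filter.1 hrm
          exact Finset.mem_filter.2 ⟨Finset.mem_of_mem_erase hre,
            Finset.card_pos.1 (by omega)⟩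
        rcases Nat.eq_zero_or_pos (gm.split C g gm.rstar).card with h0 | h0
        · rw [h0, Nat.add_zero]
          exact le_trans (Finset.card_le_card hsubA) hnb
        · have hstar_mem : gm.rstar ∈ gm.R.filter fun r => (gm.split C g r).Nonempty :=
            Finset.mem_filter.2 ⟨gm.rstar_mem, Finset.card_pos.1 h0⟩
          have hstar_notmem : gm.rstar ∉ (gm.R.erase gm.rstar).filter
              fun r => (gm.split C g r).card ≠ 0 := by
            intro hmem
            exact (Finset.mem_erase.1 (Finset.mem_filter.1 hmem).1).1 rfl
          have hins : insert gm.rstar ((gm.R.erase gm.rstar).filter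
              fun r => (gm.split C g r).card ≠ 0) ⊆ gm.R.filter
              fun r => (gm.split C g r).Nonempty := by
            intro r hrm
            rcases Finset.mem_insert.1 hrm with rfl | hrm'
            · exact hstar_mem
            · exact hsubA hrm'
          have := Finset.card_le_card hins
          rw [Finset.card_insert_of_notMem hstar_notmem] at this
          have := le_trans this hnb
          omega
      have hkey := keyB hb2 (gm.R.erase gm.rstar) (fun r => (gm.split C g r).card)
        (gm.split C g gm.rstar).card hε hcount
      have hcc : (gm.split C g gm.rstar).card
          + ∑ r ∈ gm.R.erase gm.rstar, (gm.split C g r).card = C.card := by omega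
      rw [hcc] at hkey
      calc Bound C.card (gm.MaxSplits C)
          ≤ C.card + ∑ r ∈ gm.R.erase gm.rstar,
              Bound (gm.split C g r).card (gm.MaxSplits C) := hkey
        _ ≤ C.card + ∑ r ∈ gm.R.erase gm.rstar, gm.MinTotal (gm.split C g r) :=
            Nat.add_le_add_left (Finset.sum_le_sum hterm) _
        _ = gm.MinTotal C := heq.symm

lemma main_lemma : ∀ (m : ℕ) (C : Finset α), C ⊆ gm.S →
    gm.LB (2*m+1) C ≤ gm.LB (2*m+2) C ∧ gm.LB (2*m+2) C ≤ gm.MinTotal C := by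
  intro m
  induction m with
  | zero =>
    intro C hCS
    constructor
    · show gm.LB 1 C ≤ gm.LB 2 C
      rw [LB, LB]
      by_cases hC : C = ∅
      · subst hC
        simp [Bound_zero]
      · exact Bound_anti (gm.one_le_maxSplits hCS (Finset.nonempty_iff_ne_empty.2 hC))
          (gm.maxSplits_mono hCS) C.card
    · show gm.LB 2 C ≤ gm.MinTotal C
      rw [LB]
      exact gm.LB2_le_minTotal C.card C rfl hCS
  | succ m ihm =>
    intro C hCS
    have e1 : 2*(m+1)+1 = (2*m) + 3 := by omega
    have e2 : 2*(m+1)+2 = (2*m+1) + 3 := by omega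
    rw [e1, e2]
    by_cases hC : C = ∅
    · subst hC
      rw [gm.LB_empty_succ3, gm.LB_empty_succ3, gm.minTotal_empty]
      exact ⟨le_refl 0, le_refl 0⟩
    have hCne : C.Nonempty := Finset.nonempty_iff_ne_empty.2 hC
    have hUGne := gm.UG_nonempty hCS hCne
    constructor
    · rw [gm.LB_eq_succ3 _ hC, gm.LB_eq_succ3 _ hC]
      apply sInf_finset_image_le_image hUGne
      intro g hg
      apply Nat.add_le_add_left
      apply Finset.sum_le_sum
      intro r hr
      exact (ihm _ ((gm.split_subset C g r).trans hCS)).1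
    · obtain ⟨g, hg, heq⟩ := gm.minTotal_spec hCS hC
      rw [gm.LB_eq_succ3 _ hC, heq]
      calc sInf (↑((gm.UG C).image fun g =>
            C.card + ∑ r ∈ gm.R.erase gm.rstar, gm.LB (2*m+1+1) (gm.split C g r)) : Set ℕ)
          ≤ C.card + ∑ r ∈ gm.R.erase gm.rstar, gm.LB (2*m+1+1) (gm.split C g r) :=
            sInf_finset_image_le hg
        _ ≤ C.card + ∑ r ∈ gm.R.erase gm.rstar, gm.MinTotal (gm.split C g r) := by
            apply Nat.add_le_add_left
            apply Finset.sum_le_sum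
            intro r hr
            have h22 : 2*m+1+1 = 2*m+2 := by omega
            rw [h22]
            exact (ihm _ ((gm.split_subset C g r).trans hCS)).2

end GuessingGame

section Statements

open GuessingGame

variable {α ρ : Type*} [DecidableEq α] [DecidableEq ρ]

theorem statement_12 (gm : GuessingGame α ρ) (n : ℕ) (hn : 1 ≤ n)
    (C : Finset α) (hCS : C ⊆ gm.S) :
    gm.LB (2 * n - 1) C ≤ gm.LB (2 * n) C ∧ gm.LB (2 * n) C ≤ gm.MinTotal C := by
  obtain ⟨m, rfl⟩ : ∃ m, n = m + 1 := ⟨n - 1, by omega⟩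
  have h21 : 2 * (m + 1) - 1 = 2 * m + 1 := by omega
  have h22 : 2 * (m + 1) = 2 * m + 2 := by omega
  rw [h21, h22]
  exact gm.main_lemma m C hCS

end Statements
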